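/- Let G be a group and D(G) the inductive family defined by: S ∈ D(G) if S ∩ S⁻¹ ≠ ∅, and if T ∪ {a} ∈ D(G) and T ∪ {b} ∈ D(G) then T ∪ {a*b} ∈ D(G). If S ∪ {a*b} ∈ D(G), then S ∪ {a, b} ∈ D(G). -/
import Mathlib


/-- The inductive family `D(G)` of subsets of a group `G`: a set is in `D(G)` if it meets
its own set of inverses, and the family is closed under the rule
`T ∪ {a}, T ∪ {b} ∈ D(G) ⟹ T ∪ {a*b} ∈ D(G)`. -/
inductive RightD {G : Type*} [Group G] : Set G → Prop
  | base (S : Set G) (a : G) (ha : a ∈ S) (hinv : a⁻¹ ∈ S) : RightD S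
  | step (T : Set G) (a b : G) (h1 : RightD (T ∪ {a})) (h2 : RightD (T ∪ {b})) :
      RightD (T ∪ {a * b})

/-- `RightD` is monotone: it is preserved under passing to supersets. -/
theorem RightD.mono {G : Type*} [Group G] {V W : Set G} (h : RightD V) (hVW : V ⊆ W) :
    RightD W := by
  induction h generalizing W with
  | base S x hx hxinv => exact RightD.base W x (hVW hx) (hVW hxinv)
  | step T c d h1 h2 ih1 ih2 =>
    have hW : W = (W ∪ T) ∪ {c * d} := by
      apply Set.eq_of_subset_of_subset
      · exact fun x hx => Or.inl (Or.inl hx)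
      · intro x hx
        rcases hx with hx | hx
        · rcases hx with hx | hx
          · exact hx
          · exact hVW (Or.inl hx)
        · exact hVW (Or.inr hx)
    rw [hW]
    refine RightD.step (W ∪ T) c d ?_ ?_
    · exact ih1 (fun x hx => by rcases hx with hx | hx
                                · exact Or.inl (Or.inr hx)
                                · exact Or.inr hx)
    · exact ih2 (fun x hx => by rcases hx with hx | hx
                                · exact Or.inl (Or.inr hx)
                                · exact Or.inr hx)

theorem stmt5 {G : Type*} [Group G] {S : Set G} {a b : G}
    (h : RightD (S ∪ {a * b})) : RightD (S ∪ {a, b}) := by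
  have h1 : RightD ((S ∪ {a}) ∪ {a⁻¹}) :=
    RightD.base _ a (by simp) (by simp)
  have h2 : RightD ((S ∪ {a}) ∪ {a * b}) :=
    RightD.mono h (fun x hx => hx.elim (fun hx => Or.inl (Or.inl hx)) Or.inr)
  have h3 := RightD.step (S ∪ {a}) a⁻¹ (a * b) h1 h2
  have e1 : a⁻¹ * (a * b) = b := by group
  rw [e1] at h3
  have e2 : (S ∪ {a}) ∪ {b} = S ∪ {a, b} := by
    ext x; simp [Set.mem_insert_iff]; tauto
  rwa [e2] at h3
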